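/- Let w : ℝ → ℝ be three times continuously differentiable on a neighborhood of 0. Then, as h → 0, the U-MUSCL value with κ = 1/2 reproduces the midpoint value to third order: [(1/2)·(w(0)+w(h))/2 + (1/2)·(w(0) + (h/2)w′(0))] − w(h/2) = O(h³). -/

import Mathlib

open Asymptotics

/-- Second-order Taylor remainder (Peano form, big-O version) for a `C³` function. -/
lemma taylor2_remainder_isBigO (w : ℝ → ℝ) (s : Set ℝ) (hs : s ∈ nhds (0 : ℝ))
    (hw : ContDiffOn ℝ 3 w s) :
    (fun h : ℝ => w h - w 0 - h * deriv w 0 - h ^ 2 / 2 * deriv (deriv w) 0)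
      =O[nhds 0] fun h : ℝ => h ^ 3 := by
  obtain ⟨δ, hδ, hU⟩ := Metric.mem_nhds_iff.mp hs
  set U : Set ℝ := Metric.ball 0 δ with hUdef
  have hUopen : IsOpen U := Metric.isOpen_ball
  have h0U : (0 : ℝ) ∈ U := Metric.mem_ball_self hδ
  have hwU : ContDiffOn ℝ 3 w U := hw.mono hU
  have h1 : ContDiffOn ℝ 2 (deriv w) U := by
    have := hwU.deriv_of_isOpen hUopen (m := 2) (by norm_num)
    exact this
  have h2 : ContDiffOn ℝ 1 (deriv (deriv w)) U := by
    have := h1.deriv_of_isOpen hUopen (m := 1) (by norm_num)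
    exact this
  have hdw : ∀ x ∈ U, HasDerivAt w (deriv w x) x := fun x hx =>
    ((hwU.differentiableOn (by norm_num)).differentiableAt
      (hUopen.mem_nhds hx)).hasDerivAt
  have hdw' : ∀ x ∈ U, HasDerivAt (deriv w) (deriv (deriv w) x) x := fun x hx =>
    ((h1.differentiableOn (by norm_num)).differentiableAt
      (hUopen.mem_nhds hx)).hasDerivAt
  have hdw''0 : DifferentiableAt ℝ (deriv (deriv w)) 0 :=
    (h2.differentiableOn one_ne_zero).differentiableAt (hUopen.mem_nhds h0U)
  have hO : (fun x : ℝ => deriv (deriv w) x - deriv (deriv w) 0) =O[nhds 0]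
      fun x : ℝ => x := by
    have := hdw''0.hasDerivAt.isBigO_sub
    simpa using this
  obtain ⟨C, hC⟩ := hO.bound
  rw [Metric.eventually_nhds_iff] at hC
  obtain ⟨ε, hε, hCb⟩ := hC
  set r : ℝ := min (δ / 2) (ε / 2) with hrdef
  have hr : 0 < r := lt_min (by linarith) (by linarith)
  have hrδ : r < δ := lt_of_le_of_lt (min_le_left _ _) (by linarith)
  have hrε : r < ε := lt_of_le_of_lt (min_le_right _ _) (by linarith)
  -- pointwise bound on the second derivative difference
  have hbound2 : ∀ x : ℝ, |x| ≤ r → ‖deriv (deriv w) x - deriv (deriv w) 0‖ ≤ |C| * |x| := by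
    intro x hx
    have hd : dist x 0 < ε := by
      rw [Real.dist_eq, sub_zero]; exact lt_of_le_of_lt hx hrε
    have := hCb hd
    simp only [Real.norm_eq_abs] at this ⊢
    exact this.trans (mul_le_mul_of_nonneg_right (le_abs_self C) (abs_nonneg x))
  -- main estimate
  rw [Asymptotics.isBigO_iff]
  refine ⟨|C|, ?_⟩
  rw [Metric.eventually_nhds_iff]
  refine ⟨r, hr, ?_⟩
  intro h hh
  rw [Real.dist_eq, sub_zero] at hh
  have hhr : |h| ≤ r := le_of_lt hh
  have hsub : Metric.closedBall (0 : ℝ) |h| ⊆ U := by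
    intro x hx
    rw [Metric.mem_closedBall, Real.dist_eq, sub_zero] at hx
    rw [hUdef, Metric.mem_ball, Real.dist_eq, sub_zero]
    exact lt_of_le_of_lt (le_trans hx hhr) hrδ
  have hconv : Convex ℝ (Metric.closedBall (0 : ℝ) |h|) := convex_closedBall _ _
  have h0mem : (0 : ℝ) ∈ Metric.closedBall (0 : ℝ) |h| := by
    simp [abs_nonneg]
  have hhmem : h ∈ Metric.closedBall (0 : ℝ) |h| := by
    simp [Real.dist_eq, le_refl]
  -- Step A: bound for the first-order remainder of deriv w
  set g : ℝ → ℝ := fun x => deriv w x - x * deriv (deriv w) 0 with hgdef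
  have hgA : ∀ x ∈ Metric.closedBall (0 : ℝ) |h|,
      HasDerivWithinAt g (deriv (deriv w) x - deriv (deriv w) 0)
        (Metric.closedBall (0 : ℝ) |h|) x := by
    intro x hx
    have : HasDerivAt g (deriv (deriv w) x - deriv (deriv w) 0) x := by
      have h1' := hdw' x (hsub hx)
      have h2' : HasDerivAt (fun x : ℝ => x * deriv (deriv w) 0)
          (deriv (deriv w) 0) x := by
        simpa using (hasDerivAt_id x).mul_const (deriv (deriv w) 0)
      exact h1'.sub h2'
    exact this.hasDerivWithinAt
  have hgbound : ∀ x ∈ Metric.closedBall (0 : ℝ) |h|,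
      ‖deriv (deriv w) x - deriv (deriv w) 0‖ ≤ |C| * |h| := by
    intro x hx
    rw [Metric.mem_closedBall, Real.dist_eq, sub_zero] at hx
    calc ‖deriv (deriv w) x - deriv (deriv w) 0‖ ≤ |C| * |x| :=
          hbound2 x (le_trans hx hhr)
      _ ≤ |C| * |h| := by
          exact mul_le_mul_of_nonneg_left hx (abs_nonneg C)
  have hA : ∀ x ∈ Metric.closedBall (0 : ℝ) |h|, ‖g x - g 0‖ ≤ |C| * |h| * |x| := by
    intro x hx
    have := hconv.norm_image_sub_le_of_norm_hasDerivWithin_le hgA hgbound h0mem hx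
    simpa [Real.norm_eq_abs, sub_zero] using this
  -- Step B: bound for the second-order remainder of w
  set f : ℝ → ℝ := fun x => w x - x * deriv w 0 - x ^ 2 / 2 * deriv (deriv w) 0
    with hfdef
  have hfB : ∀ x ∈ Metric.closedBall (0 : ℝ) |h|,
      HasDerivWithinAt f (g x - g 0) (Metric.closedBall (0 : ℝ) |h|) x := by
    intro x hx
    have hfd : HasDerivAt f (deriv w x - deriv w 0 - x * deriv (deriv w) 0) x := by
      have h1' := hdw x (hsub hx)
      have h2' : HasDerivAt (fun x : ℝ => x * deriv w 0) (deriv w 0) x := by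
        simpa using (hasDerivAt_id x).mul_const (deriv w 0)
      have h3' : HasDerivAt (fun x : ℝ => x ^ 2 / 2 * deriv (deriv w) 0)
          (x * deriv (deriv w) 0) x := by
        have : HasDerivAt (fun x : ℝ => x ^ 2 / 2) x x := by
          have := (hasDerivAt_pow 2 x).div_const 2
          simpa [mul_comm] using this
        simpa using this.mul_const (deriv (deriv w) 0)
      exact (h1'.sub h2').sub h3'
    have : g x - g 0 = deriv w x - deriv w 0 - x * deriv (deriv w) 0 := by
      simp only [hgdef]; ring
    rw [this]
    exact hfd.hasDerivWithinAt
  have hfbound : ∀ x ∈ Metric.closedBall (0 : ℝ) |h|,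
      ‖g x - g 0‖ ≤ |C| * |h| * |h| := by
    intro x hx
    have hx' : |x| ≤ |h| := by
      rw [Metric.mem_closedBall, Real.dist_eq, sub_zero] at hx; exact hx
    calc ‖g x - g 0‖ ≤ |C| * |h| * |x| := hA x hx
      _ ≤ |C| * |h| * |h| := by
          have : 0 ≤ |C| * |h| := mul_nonneg (abs_nonneg C) (abs_nonneg _)
          exact mul_le_mul_of_nonneg_left hx' this
  have hB := hconv.norm_image_sub_le_of_norm_hasDerivWithin_le hfB hfbound h0mem hhmem
  have hfval : f h - f 0 = w h - w 0 - h * deriv w 0 - h ^ 2 / 2 * deriv (deriv w) 0 := by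
    simp only [hfdef]; ring
  rw [hfval] at hB
  calc ‖w h - w 0 - h * deriv w 0 - h ^ 2 / 2 * deriv (deriv w) 0‖
      ≤ |C| * |h| * |h| * ‖h - 0‖ := hB
    _ = |C| * ‖h ^ 3‖ := by
        rw [Real.norm_eq_abs, Real.norm_eq_abs, sub_zero, abs_pow]; ring

/-- For `w` three times continuously differentiable on a neighborhood of 0, the U-MUSCL
value with κ = 1/2 reproduces the midpoint value to third order:
`[(1/2)(w(0)+w(h))/2 + (1/2)(w(0) + (h/2)w′(0))] − w(h/2) = O(h³)` as `h → 0`. -/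
theorem stmt_13 (w : ℝ → ℝ) (s : Set ℝ) (hs : s ∈ nhds (0 : ℝ))
    (hw : ContDiffOn ℝ 3 w s) :
    (fun h : ℝ =>
        ((1/2) * ((w 0 + w h) / 2) + (1/2) * (w 0 + (h/2) * deriv w 0)) - w (h/2))
      =O[nhds 0] fun h : ℝ => h^3 := by
  set e : ℝ → ℝ := fun h => w h - w 0 - h * deriv w 0 - h ^ 2 / 2 * deriv (deriv w) 0
    with hedef
  have he : e =O[nhds 0] fun h : ℝ => h ^ 3 :=
    taylor2_remainder_isBigO w s hs hw
  have heq : (fun h : ℝ =>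
      ((1/2) * ((w 0 + w h) / 2) + (1/2) * (w 0 + (h/2) * deriv w 0)) - w (h/2))
      = fun h : ℝ => (1/4) * e h - e (h/2) := by
    funext h
    simp only [hedef]
    ring
  rw [heq]
  have h1 : (fun h : ℝ => (1/4) * e h) =O[nhds 0] fun h : ℝ => h ^ 3 :=
    (he.const_mul_left (1/4))
  have htend : Filter.Tendsto (fun h : ℝ => h / 2) (nhds 0) (nhds 0) := by
    have := (continuous_id.div_const (2 : ℝ)).tendsto (0 : ℝ)
    simpa using this
  have h2 : (fun h : ℝ => e (h/2)) =O[nhds 0] fun h : ℝ => (h/2) ^ 3 :=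
    he.comp_tendsto htend
  have h3 : (fun h : ℝ => (h/2) ^ 3) =O[nhds 0] fun h : ℝ => h ^ 3 := by
    apply Asymptotics.isBigO_of_le' (c := 1/8)
    intro h
    rw [Real.norm_eq_abs, Real.norm_eq_abs]
    rw [div_pow, abs_div]
    norm_num [abs_pow]
    linarith
  exact h1.sub (h2.trans h3)
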